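/- Let δ, δ′ ∈ 𝔻̄ₙ, i.e., standard sets in ℕⁿ not containing the full axis ℕe₁. Define δ + δ′ = {β ∈ ℕⁿ : p(β) ∈ p(δ) ∪ p(δ′) and β₁ < #(p⁻¹(p(β)) ∩ δ) + #(p⁻¹(p(β)) ∩ δ′)}, where p : ℕⁿ → ℕⁿ⁻¹ drops the first coordinate. Then δ + δ′ is again an element of 𝔻̄ₙ. -/

import Mathlib

/-- A *standard set*: a subset of `ℕⁿ` whose complement is stable under addition. -/
def IsStandardSet {σ : Type*} (δ : Set (σ → ℕ)) : Prop :=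
  ∀ α ∉ δ, ∀ β : σ → ℕ, α + β ∉ δ

/-- `δ ⊆ ℕⁿ` does not contain the full first coordinate axis `ℕe₁`. -/
def NoFirstAxis {n : ℕ} (δ : Set (Fin (n + 1) → ℕ)) : Prop :=
  ¬ ∀ c : ℕ, Pi.single (0 : Fin (n + 1)) c ∈ δ

/-- Addition of standard sets:
`δ + δ′ = {β : p β ∈ p(δ) ∪ p(δ′), β₁ < #(p⁻¹(p β) ∩ δ) + #(p⁻¹(p β) ∩ δ′)}`,
where `p` drops the first coordinate. -/
def addStd {n : ℕ} (δ δ' : Set (Fin (n + 1) → ℕ)) : Set (Fin (n + 1) → ℕ) :=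
  {β | (β ∘ Fin.succ ∈ (fun x => x ∘ Fin.succ) '' δ ∪ (fun x => x ∘ Fin.succ) '' δ') ∧
    β 0 < {x ∈ δ | x ∘ Fin.succ = β ∘ Fin.succ}.ncard +
      {x ∈ δ' | x ∘ Fin.succ = β ∘ Fin.succ}.ncard}

lemma std_downset {σ : Type*} {δ : Set (σ → ℕ)} (h : IsStandardSet δ)
    {α β : σ → ℕ} (hβ : β ∈ δ) (hle : α ≤ β) : α ∈ δ := by
  by_contra hα
  apply h α hα (β - α)
  have : α + (β - α) = β := by
    funext i
    exact Nat.add_sub_cancel' (hle i)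
  rwa [this]

lemma fib_finite {n : ℕ} {δ : Set (Fin (n + 1) → ℕ)} (h : IsStandardSet δ) (hb : NoFirstAxis δ)
    (γ : Fin n → ℕ) : {x ∈ δ | x ∘ Fin.succ = γ}.Finite := by
  rw [NoFirstAxis, not_forall] at hb
  obtain ⟨c, hc⟩ := hb
  apply Set.Finite.of_finite_image (f := fun x => x 0)
  · apply Set.Finite.subset (Set.finite_Iio c)
    rintro _ ⟨x, ⟨hx, hxγ⟩, rfl⟩
    by_contra hlt
    push_neg at hlt
    refine hc (std_downset h hx ?_)
    intro i
    rcases eq_or_ne i 0 with rfl | hi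
    · simpa using hlt
    · simp [Pi.single_apply, hi]
  · intro x hx y hy hxy
    funext i
    rcases Fin.eq_zero_or_eq_succ i with rfl | ⟨j, rfl⟩
    · exact hxy
    · rw [show x j.succ = (x ∘ Fin.succ) j from rfl, show y j.succ = (y ∘ Fin.succ) j from rfl,
        hx.2, hy.2]

lemma fib_ncard_anti {n : ℕ} {δ : Set (Fin (n + 1) → ℕ)} (h : IsStandardSet δ)
    (hb : NoFirstAxis δ) {γ γ' : Fin n → ℕ} (hle : γ ≤ γ') :
    {x ∈ δ | x ∘ Fin.succ = γ'}.ncard ≤ {x ∈ δ | x ∘ Fin.succ = γ}.ncard := by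
  refine Set.ncard_le_ncard_of_injOn (fun x => Fin.cons (x 0) γ) ?_ ?_ (fib_finite h hb γ)
  · rintro x ⟨hx, hxγ⟩
    refine ⟨std_downset h hx ?_, by funext j; simp⟩
    intro i
    rcases Fin.eq_zero_or_eq_succ i with rfl | ⟨j, rfl⟩
    · simp
    · simpa using (hle j).trans_eq (congrFun hxγ j).symm
  · intro x hx y hy hxy
    have h0 : x 0 = y 0 := by simpa using congrFun hxy 0
    funext i
    rcases Fin.eq_zero_or_eq_succ i with rfl | ⟨j, rfl⟩
    · exact h0
    · rw [show x j.succ = (x ∘ Fin.succ) j from rfl, show y j.succ = (y ∘ Fin.succ) j from rfl,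
        hx.2, hy.2]

/-- The sum of two standard sets not containing the axis `ℕe₁` is again a standard set not
containing the axis `ℕe₁`. -/
theorem addStd_mem_Dbar {n : ℕ} (δ δ' : Set (Fin (n + 1) → ℕ))
    (hδ : IsStandardSet δ) (hδ' : IsStandardSet δ')
    (hb : NoFirstAxis δ) (hb' : NoFirstAxis δ') :
    IsStandardSet (addStd δ δ') ∧ NoFirstAxis (addStd δ δ') := by
  constructor
  · intro α hα β hmem
    apply hα
    obtain ⟨h1, h2⟩ := hmem
    have htail : α ∘ Fin.succ ≤ (α + β) ∘ Fin.succ := fun j => Nat.le_add_right _ _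
    have hanti := fib_ncard_anti hδ hb htail
    have hanti' := fib_ncard_anti hδ' hb' htail
    have hlt : α 0 < {x ∈ δ | x ∘ Fin.succ = α ∘ Fin.succ}.ncard +
        {x ∈ δ' | x ∘ Fin.succ = α ∘ Fin.succ}.ncard := by
      have : α 0 ≤ (α + β) 0 := Nat.le_add_right _ _
      omega
    refine ⟨?_, hlt⟩
    have hpos : 0 < {x ∈ δ | x ∘ Fin.succ = α ∘ Fin.succ}.ncard ∨
        0 < {x ∈ δ' | x ∘ Fin.succ = α ∘ Fin.succ}.ncard := by omega
    rcases hpos with h | h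
    · obtain ⟨x, hx, hxγ⟩ := Set.nonempty_of_ncard_ne_zero h.ne'
      exact Or.inl ⟨x, hx, hxγ⟩
    · obtain ⟨x, hx, hxγ⟩ := Set.nonempty_of_ncard_ne_zero h.ne'
      exact Or.inr ⟨x, hx, hxγ⟩
  · intro hall
    set γ0 : Fin n → ℕ := fun _ => 0 with hγ0
    have hsing : ∀ c : ℕ, (Pi.single (0 : Fin (n + 1)) c) ∘ Fin.succ = γ0 := by
      intro c; funext j; simp [Pi.single_apply, Fin.succ_ne_zero, hγ0]
    set c := {x ∈ δ | x ∘ Fin.succ = γ0}.ncard + {x ∈ δ' | x ∘ Fin.succ = γ0}.ncard with hc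
    obtain ⟨-, h2⟩ := hall c
    rw [hsing c] at h2
    simp [hc] at h2
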